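/- arXiv:2003.00524 — 2 statements merged into one kernel-verified Lean document; each statement's English description precedes it below -/
import Mathlib

section
/- Define polynomials \(b_n(\lambda)\) by \(b_0(\lambda) = 1\) and the recurrence \(b_n(\lambda) = -\lambda b_{n-1}(\lambda) - \frac{1}{4} \sum_{i=2}^{n} (-2)^i b_{n-i}(\lambda)\). Then \(b_n(\lambda) = \sum_{t=0}^{n} \sum_{k=0}^{n} \sum_{\ell=0}^{k} \binom{k}{t} \binom{t}{\ell} (-1)^k 2^{2k-n+t-2\ell} \left[ 4\binom{k-t}{2k-n-\ell+1} + \binom{k-t}{2k-n-\ell} \right] \lambda^t\). -/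
/-- Binomial coefficient with integer arguments, defined to be 0 when the
lower index is negative or exceeds the upper index. -/
def binomZ (a b : ℤ) : ℚ :=
  if 0 ≤ b ∧ b ≤ a then (a.toNat.choose b.toNat : ℚ) else 0

lemma binomZ_zero_of_neg {a b : ℤ} (h : b < 0) : binomZ a b = 0 := by
  rw [binomZ, if_neg]; rintro ⟨h1, h2⟩; omega

lemma binomZ_zero_of_gt {a b : ℤ} (h : a < b) : binomZ a b = 0 := by
  rw [binomZ, if_neg]; rintro ⟨h1, h2⟩; omega

lemma binomZ_nonneg_eq (a : ℕ) (b : ℤ) (hb : 0 ≤ b) :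
    binomZ a b = (a.choose b.toNat : ℚ) := by
  rw [binomZ]
  split_ifs with h
  · simp
  · rw [Nat.choose_eq_zero_of_lt (by omega)]; simp

lemma binomZ_pascal (a : ℕ) (b : ℤ) :
    binomZ ((a : ℤ) + 1) b = binomZ a b + binomZ a (b - 1) := by
  rcases lt_trichotomy b 0 with hb | hb | hb
  · rw [binomZ_zero_of_neg hb, binomZ_zero_of_neg hb,
      binomZ_zero_of_neg (by omega)]
    ring
  · subst hb
    rw [show ((a : ℤ) + 1) = ((a + 1 : ℕ) : ℤ) by push_cast; ring]
    rw [binomZ_nonneg_eq _ _ le_rfl, binomZ_nonneg_eq _ _ le_rfl,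
      binomZ_zero_of_neg (show (0:ℤ) - 1 < 0 by omega)]
    simp
  · rw [show ((a : ℤ) + 1) = ((a + 1 : ℕ) : ℤ) by push_cast; ring]
    rw [binomZ_nonneg_eq _ _ (by omega), binomZ_nonneg_eq _ _ (by omega),
      binomZ_nonneg_eq _ _ (by omega)]
    have h1 : b.toNat = (b - 1).toNat + 1 := by omega
    rw [h1, Nat.choose_succ_succ']
    push_cast; ring

lemma binomZ_pascal' (a : ℤ) (ha : 0 ≤ a) (b : ℤ) :
    binomZ (a + 1) b = binomZ a b + binomZ a (b - 1) := by
  lift a to ℕ using ha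
  exact binomZ_pascal a b
def T (lam : ℚ) (n : ℤ) (k t l : ℕ) : ℚ :=
  (Nat.choose k t : ℚ) * (Nat.choose t l : ℚ) * (-1) ^ k *
    (2 : ℚ) ^ (2 * (k : ℤ) - n + t - 2 * l) *
    (4 * binomZ ((k : ℤ) - t) (2 * (k : ℤ) - n - l + 1) +
      binomZ ((k : ℤ) - t) (2 * (k : ℤ) - n - l)) * lam ^ t

def W (lam : ℚ) (n : ℤ) (k t l : ℕ) : ℚ :=
  (Nat.choose t l : ℚ) * (-1) ^ (k + 1) *
    (2 : ℚ) ^ (2 * ((k : ℤ) + 1) - n + t - 2 * l) *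
    (4 * binomZ ((k : ℤ) + 1 - t) (2 * ((k : ℤ) + 1) - n - l + 1) +
      binomZ ((k : ℤ) + 1 - t) (2 * ((k : ℤ) + 1) - n - l)) * lam ^ t

def R (lam : ℚ) (k : ℕ) (n : ℤ) : ℚ :=
  ∑ t ∈ Finset.range (k + 1), ∑ l ∈ Finset.range (k + 1), T lam n k t l

lemma T_succ (lam : ℚ) (n : ℤ) (k t l : ℕ) :
    T lam n (k + 1) t l = (Nat.choose (k + 1) t : ℚ) * W lam n k t l := by
  simp only [T, W]
  push_cast
  ring

lemma T_zero₁ (lam : ℚ) (n : ℤ) {k t : ℕ} (l : ℕ) (h : k < t) :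
    T lam n k t l = 0 := by
  simp [T, Nat.choose_eq_zero_of_lt h]

lemma T_zero₂ (lam : ℚ) (n : ℤ) {t l : ℕ} (k : ℕ) (h : t < l) :
    T lam n k t l = 0 := by
  simp [T, Nat.choose_eq_zero_of_lt h]
lemma two_zpow_succ (x : ℤ) : (2 : ℚ) ^ (x + 1) = (2 : ℚ) ^ x * 2 :=
  zpow_add_one₀ two_ne_zero x

lemma claim1 (lam : ℚ) (n : ℤ) (k t l : ℕ) :
    (Nat.choose k t : ℚ) * W lam n k t l =
      -2 * T lam (n - 1) k t l - T lam (n - 2) k t l := by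
  by_cases h : t ≤ k
  · have hp : ∀ b : ℤ, binomZ ((k : ℤ) + 1 - t) b =
        binomZ ((k : ℤ) - t) b + binomZ ((k : ℤ) - t) (b - 1) := by
      intro b
      rw [show (k : ℤ) + 1 - t = ((k : ℤ) - t) + 1 by ring,
        binomZ_pascal' _ (by omega) b]
    simp only [T, W, hp]
    rw [show (2 * ((k : ℤ) + 1) - n - l + 1) = (2 * (k : ℤ) - n - l) + 3 by ring,
      show ((2 * (k : ℤ) - n - l) + 3 - 1) = (2 * (k : ℤ) - n - l) + 2 by ring,
      show (2 * ((k : ℤ) + 1) - n - l) = (2 * (k : ℤ) - n - l) + 2 by ring,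
      show ((2 * (k : ℤ) - n - l) + 2 - 1) = (2 * (k : ℤ) - n - l) + 1 by ring,
      show (2 * (k : ℤ) - (n - 1) - l + 1) = (2 * (k : ℤ) - n - l) + 2 by ring,
      show (2 * (k : ℤ) - (n - 1) - l) = (2 * (k : ℤ) - n - l) + 1 by ring,
      show (2 * (k : ℤ) - (n - 2) - l + 1) = (2 * (k : ℤ) - n - l) + 3 by ring,
      show (2 * (k : ℤ) - (n - 2) - l) = (2 * (k : ℤ) - n - l) + 2 by ring,
      show (2 * ((k : ℤ) + 1) - n + t - 2 * l) =
        (2 * (k : ℤ) - n + t - 2 * l) + 1 + 1 by ring,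
      show (2 * (k : ℤ) - (n - 1) + t - 2 * l) =
        (2 * (k : ℤ) - n + t - 2 * l) + 1 by ring,
      show (2 * (k : ℤ) - (n - 2) + t - 2 * l) =
        (2 * (k : ℤ) - n + t - 2 * l) + 1 + 1 by ring]
    simp only [two_zpow_succ]
    ring
  · push_neg at h
    simp [W, T, Nat.choose_eq_zero_of_lt h]
def V (lam : ℚ) (n : ℤ) (k t l : ℕ) : ℚ :=
  (-1) ^ (k + 1) *
    (2 : ℚ) ^ (2 * ((k : ℤ) + 1) - n + t - 2 * l) *
    (4 * binomZ ((k : ℤ) + 1 - t) (2 * ((k : ℤ) + 1) - n - l + 1) +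
      binomZ ((k : ℤ) + 1 - t) (2 * ((k : ℤ) + 1) - n - l)) * lam ^ t

lemma W_eq_V (lam : ℚ) (n : ℤ) (k t l : ℕ) :
    W lam n k t l = (Nat.choose t l : ℚ) * V lam n k t l := by
  simp only [W, V]; ring

lemma claim2 (lam : ℚ) (n : ℤ) (k t l : ℕ) :
    (Nat.choose k t : ℚ) * ((Nat.choose t l : ℚ) * V lam n k (t + 1) l) =
      -(2 * lam) * T lam (n - 2) k t l := by
  simp only [V, T]
  push_cast
  rw [show ((k : ℤ) + 1 - ((t : ℤ) + 1)) = (k : ℤ) - t by ring,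
    show (2 * ((k : ℤ) + 1) - n - l + 1) = 2 * (k : ℤ) - (n - 2) - l + 1 by ring,
    show (2 * ((k : ℤ) + 1) - n - l) = 2 * (k : ℤ) - (n - 2) - l by ring,
    show (2 * ((k : ℤ) + 1) - n + ((t : ℤ) + 1) - 2 * l) =
      (2 * (k : ℤ) - (n - 2) + t - 2 * l) + 1 by ring,
    two_zpow_succ]
  ring

lemma claim3 (lam : ℚ) (n : ℤ) (k t l : ℕ) :
    (Nat.choose k t : ℚ) * ((Nat.choose t l : ℚ) * V lam n k (t + 1) (l + 1)) =
      -lam * T lam (n - 1) k t l := by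
  simp only [V, T]
  push_cast
  rw [show ((k : ℤ) + 1 - ((t : ℤ) + 1)) = (k : ℤ) - t by ring,
    show (2 * ((k : ℤ) + 1) - n - ((l : ℤ) + 1) + 1) = 2 * (k : ℤ) - (n - 1) - l + 1 by ring,
    show (2 * ((k : ℤ) + 1) - n - ((l : ℤ) + 1)) = 2 * (k : ℤ) - (n - 1) - l by ring,
    show (2 * ((k : ℤ) + 1) - n + ((t : ℤ) + 1) - 2 * ((l : ℤ) + 1)) =
      2 * (k : ℤ) - (n - 1) + t - 2 * l by ring]
  ring
lemma choose_split (f : ℕ → ℚ) (m N : ℕ) :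
    ∑ t ∈ Finset.range (N + 1), (Nat.choose (m + 1) t : ℚ) * f t =
      ∑ t ∈ Finset.range (N + 1), (Nat.choose m t : ℚ) * f t +
        ∑ t ∈ Finset.range N, (Nat.choose m t : ℚ) * f (t + 1) := by
  rw [Finset.sum_range_succ' (fun t => (Nat.choose (m + 1) t : ℚ) * f t) N,
    Finset.sum_range_succ' (fun t => (Nat.choose m t : ℚ) * f t) N]
  simp only [Nat.choose_succ_succ', Nat.cast_add, add_mul,
    Finset.sum_add_distrib, Nat.choose_zero_right, Nat.cast_one]
  ring

lemma sum_T (lam : ℚ) (k : ℕ) (n : ℤ) {M N : ℕ} (hM : k + 1 ≤ M) (hN : k + 1 ≤ N) :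
    ∑ t ∈ Finset.range M, ∑ l ∈ Finset.range N, T lam n k t l = R lam k n := by
  rw [R]
  rw [← Finset.sum_subset (Finset.range_subset_range.2 hM)]
  · refine Finset.sum_congr rfl fun t ht => ?_
    rw [← Finset.sum_subset (Finset.range_subset_range.2 hN)]
    intro l _ hl
    simp only [Finset.mem_range, not_lt] at hl ht
    exact T_zero₂ lam n k (by omega)
  · intro t _ ht
    simp only [Finset.mem_range, not_lt] at ht
    exact Finset.sum_eq_zero fun l _ => T_zero₁ lam n l (by omega)

lemma Rstep (lam : ℚ) (k : ℕ) (n : ℤ) :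
    R lam (k + 1) n = -(lam + 2) * R lam k (n - 1) - (2 * lam + 1) * R lam k (n - 2) := by
  have hA : R lam (k + 1) n =
      ∑ t ∈ Finset.range (k + 2), (Nat.choose (k + 1) t : ℚ) *
        (∑ l ∈ Finset.range (k + 2), W lam n k t l) := by
    rw [R]
    refine Finset.sum_congr rfl fun t _ => ?_
    rw [Finset.mul_sum]
    exact Finset.sum_congr rfl fun l _ => T_succ lam n k t l
  rw [hA, choose_split (fun t => ∑ l ∈ Finset.range (k + 2), W lam n k t l) k (k + 1)]
  have hPartA : ∑ t ∈ Finset.range (k + 2), (Nat.choose k t : ℚ) *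
      (∑ l ∈ Finset.range (k + 2), W lam n k t l) =
      -2 * R lam k (n - 1) - R lam k (n - 2) := by
    have : ∀ t, (Nat.choose k t : ℚ) * (∑ l ∈ Finset.range (k + 2), W lam n k t l) =
        ∑ l ∈ Finset.range (k + 2),
          (-2 * T lam (n - 1) k t l - T lam (n - 2) k t l) := by
      intro t
      rw [Finset.mul_sum]
      exact Finset.sum_congr rfl fun l _ => claim1 lam n k t l
    simp only [this, Finset.sum_sub_distrib, ← Finset.mul_sum]
    rw [sum_T lam k (n - 1) (by omega) (by omega),
      sum_T lam k (n - 2) (by omega) (by omega)]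
  have hPartB : ∑ t ∈ Finset.range (k + 1), (Nat.choose k t : ℚ) *
      (∑ l ∈ Finset.range (k + 2), W lam n k (t + 1) l) =
      -(2 * lam) * R lam k (n - 2) - lam * R lam k (n - 1) := by
    have hper : ∀ t, (Nat.choose k t : ℚ) *
        (∑ l ∈ Finset.range (k + 2), W lam n k (t + 1) l) =
        (∑ l ∈ Finset.range (k + 2), -(2 * lam) * T lam (n - 2) k t l) +
          (∑ l ∈ Finset.range (k + 1), -lam * T lam (n - 1) k t l) := by
      intro t
      have hsplit : ∑ l ∈ Finset.range (k + 2), W lam n k (t + 1) l =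
          ∑ l ∈ Finset.range (k + 2), (Nat.choose t l : ℚ) * V lam n k (t + 1) l +
            ∑ l ∈ Finset.range (k + 1), (Nat.choose t l : ℚ) * V lam n k (t + 1) (l + 1) := by
        simp only [W_eq_V]
        exact choose_split (fun l => V lam n k (t + 1) l) t (k + 1)
      rw [hsplit, mul_add, Finset.mul_sum, Finset.mul_sum]
      congr 1
      · exact Finset.sum_congr rfl fun l _ => by
          rw [← mul_assoc, mul_assoc]
          exact claim2 lam n k t l
      · exact Finset.sum_congr rfl fun l _ => by
          rw [← mul_assoc, mul_assoc]
          exact claim3 lam n k t l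
    simp only [hper, Finset.sum_add_distrib, ← Finset.mul_sum]
    rw [sum_T lam k (n - 2) (by omega) (by omega),
      sum_T lam k (n - 1) (by omega) (by omega)]
    ring
  rw [hPartA, hPartB]
  ring
def G (lam : ℚ) (n : ℕ) : ℚ := ∑ k ∈ Finset.range (n + 1), R lam k (n : ℤ)

lemma G_zero (lam : ℚ) : G lam 0 = 1 := by
  norm_num [G, R, T, binomZ]

lemma G_one (lam : ℚ) : G lam 1 = -lam := by
  norm_num [G, R, T, binomZ, Finset.sum_range_succ, Int.toNat_natCast]
  norm_num [show Int.toNat 2 = 2 from rfl]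

lemma Rtop (lam : ℚ) (n : ℕ) : R lam (n + 1) (n : ℤ) = 0 := by
  rw [R]
  refine Finset.sum_eq_zero fun t ht => Finset.sum_eq_zero fun l hl => ?_
  simp only [Finset.mem_range] at ht hl
  by_cases h1 : t < l
  · exact T_zero₂ lam n (n + 1) h1
  by_cases h2 : n + 1 < t
  · exact T_zero₁ lam n l h2
  push_neg at h1 h2
  simp only [T]
  rw [binomZ_zero_of_gt (show ((n + 1 : ℕ) : ℤ) - t <
      2 * ((n + 1 : ℕ) : ℤ) - n - l + 1 by push_cast; omega),
    binomZ_zero_of_gt (show ((n + 1 : ℕ) : ℤ) - t <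
      2 * ((n + 1 : ℕ) : ℤ) - n - l by push_cast; omega)]
  ring

lemma R_zero_top (lam : ℚ) (n : ℕ) : R lam 0 ((n : ℤ) + 2) = 0 := by
  simp only [R, show (0 : ℕ) + 1 = 1 from rfl, Finset.sum_range_one, T]
  rw [binomZ_zero_of_neg (show 2 * ((0 : ℕ) : ℤ) - ((n : ℤ) + 2) - ((0 : ℕ) : ℤ) + 1 < 0 by
      push_cast; omega),
    binomZ_zero_of_neg (show 2 * ((0 : ℕ) : ℤ) - ((n : ℤ) + 2) - ((0 : ℕ) : ℤ) < 0 by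
      push_cast; omega)]
  ring

lemma Gstep (lam : ℚ) (n : ℕ) :
    G lam (n + 2) = -(lam + 2) * G lam (n + 1) - (2 * lam + 1) * G lam n := by
  have hR : ∀ k, R lam (k + 1) ((n : ℤ) + 2) =
      -(lam + 2) * R lam k ((n : ℤ) + 1) - (2 * lam + 1) * R lam k (n : ℤ) := by
    intro k
    have h := Rstep lam k ((n : ℤ) + 2)
    rw [show ((n : ℤ) + 2 - 1) = (n : ℤ) + 1 by ring,
      show ((n : ℤ) + 2 - 2) = (n : ℤ) by ring] at h
    exact h
  have e1 : G lam (n + 2) = ∑ k ∈ Finset.range (n + 2), R lam (k + 1) ((n : ℤ) + 2) := by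
    rw [G, show ((n + 2 : ℕ) : ℤ) = (n : ℤ) + 2 by push_cast; ring,
      Finset.sum_range_succ' (fun k => R lam k ((n : ℤ) + 2)) (n + 2),
      R_zero_top, add_zero]
  have e2 : G lam (n + 1) = ∑ k ∈ Finset.range (n + 2), R lam k ((n : ℤ) + 1) := by
    rw [G, show ((n + 1 : ℕ) : ℤ) = (n : ℤ) + 1 by push_cast; ring,
      show n + 1 + 1 = n + 2 by omega]
  have e3 : G lam n + R lam (n + 1) (n : ℤ) = ∑ k ∈ Finset.range (n + 2), R lam k (n : ℤ) := by
    rw [G, ← Finset.sum_range_succ (fun k => R lam k (n : ℤ)) (n + 1),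
      show n + 1 + 1 = n + 2 by omega]
  rw [e1]
  simp only [hR, Finset.sum_sub_distrib, ← Finset.mul_sum]
  rw [← e2, ← e3, Rtop, add_zero]
lemma sum_shift (b : ℕ → ℚ) (n : ℕ) :
    ∑ i ∈ Finset.Icc 2 (n + 2), (-2 : ℚ) ^ i * b (n + 2 - i) =
      4 * b n + (-2) * ∑ i ∈ Finset.Icc 2 (n + 1), (-2 : ℚ) ^ i * b (n + 1 - i) := by
  have h1 : Finset.Icc 2 (n + 2) = insert 2 (Finset.Icc 3 (n + 2)) := by
    ext x; simp only [Finset.mem_Icc, Finset.mem_insert]; omega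
  rw [h1, Finset.sum_insert (by simp [Finset.mem_Icc])]
  have h2 : Finset.Icc 3 (n + 2) = Finset.map (addRightEmbedding 1) (Finset.Icc 2 (n + 1)) := by
    rw [Finset.map_add_right_Icc]
  rw [h2, Finset.sum_map]
  have h3 : ∀ i ∈ Finset.Icc 2 (n + 1),
      (-2 : ℚ) ^ (addRightEmbedding 1 i) * b (n + 2 - addRightEmbedding 1 i) =
        (-2) * ((-2 : ℚ) ^ i * b (n + 1 - i)) := by
    intro i hi
    simp only [addRightEmbedding_apply]
    rw [show n + 2 - (i + 1) = n + 1 - i by omega, pow_succ]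
    ring
  rw [Finset.sum_congr rfl h3, ← Finset.mul_sum]
  norm_num

lemma bstep (lam : ℚ) (b : ℕ → ℚ)
    (hrec : ∀ n, 1 ≤ n → b n = -lam * b (n - 1) -
      (1 / 4) * ∑ i ∈ Finset.Icc 2 n, (-2 : ℚ) ^ i * b (n - i)) (n : ℕ) :
    b (n + 2) = -(lam + 2) * b (n + 1) - (2 * lam + 1) * b n := by
  have h2 := hrec (n + 2) (by omega)
  have h1 := hrec (n + 1) (by omega)
  rw [show n + 2 - 1 = n + 1 by omega] at h2
  rw [show n + 1 - 1 = n by omega] at h1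
  rw [sum_shift b n] at h2
  linear_combination h2 + 2 * h1

/-- Let `b n = b_n(λ)` satisfy `b_0(λ) = 1` and
`b_n(λ) = -λ b_{n-1}(λ) - (1/4) ∑_{i=2}^{n} (-2)^i b_{n-i}(λ)`.
Then `b_n(λ) = ∑_{t=0}^{n} ∑_{k=0}^{n} ∑_{ℓ=0}^{k} C(k,t) C(t,ℓ) (-1)^k
2^{2k-n+t-2ℓ} [4 C(k-t, 2k-n-ℓ+1) + C(k-t, 2k-n-ℓ)] λ^t`. -/
theorem stmt6 (lam : ℚ) (b : ℕ → ℚ) (h0 : b 0 = 1)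
    (hrec : ∀ n, 1 ≤ n →
      b n = -lam * b (n - 1) -
        (1 / 4) * ∑ i ∈ Finset.Icc 2 n, (-2 : ℚ) ^ i * b (n - i)) :
    ∀ n, b n = ∑ t ∈ Finset.range (n + 1), ∑ k ∈ Finset.range (n + 1),
      ∑ l ∈ Finset.range (k + 1),
        (Nat.choose k t : ℚ) * (Nat.choose t l : ℚ) * (-1) ^ k *
          (2 : ℚ) ^ (2 * (k : ℤ) - n + t - 2 * l) *
          (4 * binomZ ((k : ℤ) - t) (2 * (k : ℤ) - n - l + 1) +
            binomZ ((k : ℤ) - t) (2 * (k : ℤ) - n - l)) * lam ^ t := by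
  have key : ∀ n, b n = G lam n := by
    intro n
    induction n using Nat.strong_induction_on with
    | _ n ih =>
      match n with
      | 0 => rw [h0, G_zero]
      | 1 =>
        have h := hrec 1 le_rfl
        rw [show Finset.Icc 2 1 = ∅ by rfl] at h
        simp only [Finset.sum_empty, mul_zero, sub_zero] at h
        rw [h, h0, G_one]
        norm_num
      | (m + 2) =>
        rw [bstep lam b hrec m, ih (m + 1) (by omega), ih m (by omega), Gstep]
  intro n
  rw [key n]
  calc G lam n
      = ∑ k ∈ Finset.range (n + 1), ∑ t ∈ Finset.range (n + 1),
          ∑ l ∈ Finset.range (k + 1), T lam (n : ℤ) k t l := by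
        refine Finset.sum_congr rfl fun k hk => ?_
        simp only [Finset.mem_range] at hk
        exact (sum_T lam k (n : ℤ) (by omega) (by omega)).symm
    _ = ∑ t ∈ Finset.range (n + 1), ∑ k ∈ Finset.range (n + 1),
          ∑ l ∈ Finset.range (k + 1), T lam (n : ℤ) k t l := Finset.sum_comm
    _ = _ := rfl
end

section
/- For \(k \geq 3\), \(r \geq 2\), and \(1 \leq j \leq r\), the numbers \(v_j^r = \frac{j}{r} \binom{(k-1)r - j - 1}{r-j}\) satisfy \(v_j^{r+1} = v_{j-1}^{r} + \sum_{m=j-1}^{r-1} \binom{m - j + k - 1}{k-3} v_{m+1}^{r}\) for \(j \geq 2\), and \(v_1^{r+1} = \sum_{m=0}^{r-1} \binom{m+k-2}{k-3} v_{m+1}^{r}\), where \(v_0^r = 0\). -/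
/-- The number of k-angulations with r k-gons whose root vertex has degree
`j - 1`: `v_j^r = (j/r) C((k-1)r - j - 1, r - j)`. -/
def vAng (k r j : ℕ) : ℚ :=
  (j : ℚ) / r * binomZ (((k : ℤ) - 1) * r - j - 1) ((r : ℤ) - j)

open Finset

lemma binomZ_natCast (a b : ℕ) : binomZ (a : ℤ) (b : ℤ) = (a.choose b : ℚ) := by
  unfold binomZ
  rcases le_or_gt b a with h | h
  · rw [if_pos ⟨Int.natCast_nonneg b, by exact_mod_cast h⟩]
    simp
  · rw [if_neg (by push_neg; intro _; exact_mod_cast h), Nat.choose_eq_zero_of_lt h]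
    simp

/-- Vandermonde-type convolution: `∑ C(a+t,t) C(c+N-t,N-t) = C(a+c+N+1,N)`. -/
lemma vandA : ∀ c a N : ℕ,
    ∑ t ∈ range (N+1), (a+t).choose t * (c+(N-t)).choose (N-t) = (a+c+N+1).choose N := by
  intro c
  induction c with
  | zero =>
    intro a N
    induction N with
    | zero => simp
    | succ N ih =>
      rw [Finset.sum_range_succ]
      have h0 : ∑ t ∈ range (N+1), (a+t).choose t * (0+(N+1-t)).choose (N+1-t)
          = ∑ t ∈ range (N+1), (a+t).choose t * (0+(N-t)).choose (N-t) := by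
        apply Finset.sum_congr rfl; intro t ht
        simp [Nat.choose_self]
      rw [h0, ih]
      simp only [Nat.sub_self, Nat.zero_add, Nat.choose_self, mul_one]
      rw [show a+0+(N+1)+1 = (a+0+N+1)+1 by ring, Nat.choose_succ_succ]
      rw [show a+(N+1) = a+0+N+1 by ring]
  | succ c ihc =>
    intro a N
    induction N with
    | zero => simp
    | succ N ihN =>
      have key : ∀ t ∈ range (N+1),
          (a+t).choose t * ((c+1)+(N+1-t)).choose (N+1-t)
            = (a+t).choose t * (c+(N+1-t)).choose (N+1-t)
              + (a+t).choose t * ((c+1)+(N-t)).choose (N-t) := by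
        intro t ht
        rw [Finset.mem_range] at ht
        have h1 : (c+1)+(N+1-t) = (c+(N+1-t)) + 1 := by omega
        have h2 : c+(N+1-t) = (c+1)+(N-t) := by omega
        have h3 : N+1-t = (N-t)+1 := by omega
        rw [h1, h2, h3, Nat.choose_succ_succ, mul_add]
        simp only [Nat.succ_eq_add_one]
        ring
      rw [Finset.sum_range_succ, Finset.sum_congr rfl key, Finset.sum_add_distrib]
      have h1 := ihc a (N+1)
      rw [Finset.sum_range_succ] at h1
      simp only [Nat.sub_self, Nat.choose_self, Nat.add_zero, Nat.choose_zero_right,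
        mul_one] at h1 ⊢
      rw [ihN]
      rw [show a+(c+1)+(N+1)+1 = (a+c+(N+1)+1)+1 by ring, Nat.choose_succ_succ]
      rw [show a+(c+1)+N+1 = a+c+(N+1)+1 by ring]
      simp only [Nat.succ_eq_add_one]
      omega

lemma choose_swap (a t : ℕ) : (t+a).choose a = (a+t).choose t := by
  rw [Nat.add_comm]
  have := Nat.choose_symm (Nat.le_add_right a t)
  rw [Nat.add_sub_cancel_left] at this
  exact this.symm

/-- Weighted Vandermonde convolution:
`∑ t C(a+t,t) C(c+N+1-t,N+1-t) = (a+1) C(a+c+N+2,N)`. -/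
lemma vandB (a c N : ℕ) :
    ∑ t ∈ range (N+2), t * ((a+t).choose t * (c+(N+1-t)).choose (N+1-t))
      = (a+1) * (a+c+N+2).choose N := by
  rw [Finset.sum_range_succ']
  simp only [Nat.zero_mul, add_zero, zero_mul]
  have key : ∀ i ∈ range (N+1),
      (i+1) * ((a+(i+1)).choose (i+1) * (c+(N+1-(i+1))).choose (N+1-(i+1)))
        = (a+1) * (((a+1)+i).choose i * (c+(N-i)).choose (N-i)) := by
    intro i hi
    have h2 : N+1-(i+1) = N-i := by omega
    rw [h2, show a+(i+1) = (a+i)+1 by ring]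
    have h4 := Nat.choose_succ_right_eq (a+i+1) i
    rw [show a+i+1-i = a+1 by omega] at h4
    calc (i+1) * ((a+i+1).choose (i+1) * ((c+(N-i)).choose (N-i)))
        = ((a+i+1).choose (i+1) * (i+1)) * ((c+(N-i)).choose (N-i)) := by ring
      _ = ((a+i+1).choose i * (a+1)) * ((c+(N-i)).choose (N-i)) := by rw [h4]
      _ = (a+1) * (((a+1)+i).choose i * (c+(N-i)).choose (N-i)) := by
          rw [show (a+1)+i = a+i+1 by ring]; ring
  rw [Finset.sum_congr rfl key, ← Finset.mul_sum, vandA c (a+1) N,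
    show (a+1)+c+N+1 = a+c+N+2 by ring]

/-- Unified production-matrix recurrence for the closed-form counts. -/
lemma key (k r j : ℕ) (hk : 3 ≤ k) (hj : 1 ≤ j) (hjr : j ≤ r) :
    vAng k (r+1) j
      = ∑ t ∈ Finset.range (r-j+2), binomZ ((t:ℤ) + k - 3) ((k:ℤ) - 3) * vAng k r (j-1+t) := by
  obtain ⟨K, rfl⟩ : ∃ K, k = K+3 := ⟨k-3, by omega⟩
  obtain ⟨J, rfl⟩ : ∃ J, j = J+1 := ⟨j-1, by omega⟩
  obtain ⟨s, rfl⟩ : ∃ s, r = J+1+s := ⟨r-(J+1), by omega⟩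
  set c : ℕ := (K+1)*(J+s)+K with hc
  set T : ℕ := (K+1)*(J+s)+2*K+s+2 with hT
  rw [show J+1+s-(J+1)+2 = s+2 by omega]
  simp only [Nat.add_sub_cancel]
  have hterm : ∀ t ∈ range (s+2),
      binomZ ((t:ℤ) + ((K+3:ℕ):ℤ) - 3) (((K+3:ℕ):ℤ) - 3) * vAng (K+3) (J+1+s) (J+t)
        = ((J:ℚ) * (((K+t).choose t : ℚ) * (((c+(s+1-t)).choose (s+1-t) : ℚ)))
            + (t:ℚ) * (((K+t).choose t : ℚ) * (((c+(s+1-t)).choose (s+1-t) : ℚ))))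
            / ((J+1+s : ℕ) : ℚ) := by
    intro t ht
    rw [Finset.mem_range] at ht
    have ht' : t ≤ s+1 := by omega
    rw [show ((t:ℤ) + ((K+3:ℕ):ℤ) - 3) = ((t+K : ℕ) : ℤ) by push_cast; ring,
       show (((K+3:ℕ):ℤ) - 3) = ((K:ℕ):ℤ) by push_cast; ring,
       binomZ_natCast]
    unfold vAng
    have e1 : ((((K+3:ℕ)):ℤ) - 1) * ((J+1+s : ℕ) : ℤ) - ((J+t : ℕ):ℤ) - 1
        = ((c + (s+1-t) : ℕ) : ℤ) := by
      have h2 : ((c + (s+1-t) : ℕ) : ℤ) = (c:ℤ) + (s:ℤ) + 1 - t := by omega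
      rw [h2, hc]; push_cast; ring
    have e2 : ((J+1+s : ℕ) : ℤ) - ((J+t : ℕ):ℤ) = ((s+1-t : ℕ) : ℤ) := by omega
    rw [e1, e2, binomZ_natCast, choose_swap]
    push_cast
    ring
  rw [Finset.sum_congr rfl hterm, ← Finset.sum_div, Finset.sum_add_distrib, ← Finset.mul_sum]
  have hA := vandA c K (s+1)
  rw [show K+c+(s+1)+1 = T by rw [hc, hT]; ring] at hA
  have hB := vandB K c s
  rw [show K+c+s+2 = T by rw [hc, hT]; ring] at hB
  have hA' : ∑ t ∈ range (s+2), (((K+t).choose t : ℚ) * (((c+(s+1-t)).choose (s+1-t) : ℚ)))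
      = ((T.choose (s+1) : ℚ)) := by exact_mod_cast congrArg (Nat.cast : ℕ → ℚ) hA
  have hB' : ∑ t ∈ range (s+2),
        ((t:ℚ) * (((K+t).choose t : ℚ) * (((c+(s+1-t)).choose (s+1-t) : ℚ))))
      = ((K:ℚ)+1) * ((T.choose s : ℚ)) := by exact_mod_cast congrArg (Nat.cast : ℕ → ℚ) hB
  rw [hA', hB']
  unfold vAng
  have e3 : ((((K+3:ℕ)):ℤ) - 1) * ((J+1+s+1 : ℕ) : ℤ) - ((J+1 : ℕ):ℤ) - 1 = ((T:ℕ):ℤ) := by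
    rw [show ((T:ℕ):ℤ) = ((K:ℤ)+1)*((J:ℤ)+s)+2*K+s+2 by rw [hT]; push_cast; ring]
    push_cast; ring
  have e4 : ((J+1+s+1 : ℕ) : ℤ) - ((J+1 : ℕ):ℤ) = ((s+1 : ℕ) : ℤ) := by omega
  rw [e3, e4, binomZ_natCast]
  have hC := Nat.choose_succ_right_eq T s
  rw [show T - s = (K+1)*(J+s)+2*K+2 by omega] at hC
  have hC' : (T.choose (s+1) : ℚ) * ((s:ℚ)+1)
      = (T.choose s : ℚ) * (((K:ℚ)+1)*((J:ℚ)+s)+2*K+2) := by exact_mod_cast hC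
  have hr1 : ((J+1+s+1 : ℕ) : ℚ) ≠ 0 := by positivity
  have hr2 : ((J+1+s : ℕ) : ℚ) ≠ 0 := by positivity
  field_simp
  push_cast
  ring_nf
  ring_nf at hC'
  linear_combination hC'

lemma vAng_zero (k r : ℕ) : vAng k r 0 = 0 := by simp [vAng]

/-- For `k ≥ 3`, `r ≥ 2` and `1 ≤ j ≤ r`, the closed-form counts satisfy
`v_j^{r+1} = v_{j-1}^r + ∑_{m=j-1}^{r-1} C(m-j+k-1, k-3) v_{m+1}^r` for `j ≥ 2`
and `v_1^{r+1} = ∑_{m=0}^{r-1} C(m+k-2, k-3) v_{m+1}^r`, where `v_0^r = 0`. -/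
theorem stmt14 (k r : ℕ) (hk : 3 ≤ k) (hr : 2 ≤ r) :
    (∀ j, 2 ≤ j → j ≤ r →
      vAng k (r + 1) j =
        vAng k r (j - 1) +
          ∑ m ∈ Finset.Icc (j - 1) (r - 1),
            binomZ ((m : ℤ) - j + k - 1) ((k : ℤ) - 3) * vAng k r (m + 1)) ∧
    vAng k (r + 1) 1 =
      ∑ m ∈ Finset.range r, binomZ ((m : ℤ) + k - 2) ((k : ℤ) - 3) * vAng k r (m + 1) ∧
    vAng k r 0 = 0 := by
  have hone : binomZ (((0:ℕ):ℤ) + (k:ℤ) - 3) ((k:ℤ) - 3) = 1 := by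
    rw [show (((0:ℕ):ℤ) + (k:ℤ) - 3) = ((k-3 : ℕ) : ℤ) by omega,
       show ((k:ℤ) - 3) = ((k-3 : ℕ) : ℤ) by omega, binomZ_natCast, Nat.choose_self]
    norm_num
  refine ⟨?_, ?_, vAng_zero k r⟩
  · intro j hj2 hjr
    rw [key k r j hk (by omega) hjr, show r-j+2 = (r-j+1)+1 by omega,
      Finset.sum_range_succ', hone, one_mul, Nat.add_zero,
      ← Finset.Ico_add_one_right_eq_Icc, Finset.sum_Ico_eq_sum_range, show r-1+1-(j-1) = r-j+1 by omega]
    have hsc : ∀ i ∈ range (r-j+1),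
        binomZ (((i+1 : ℕ):ℤ) + k - 3) ((k:ℤ) - 3) * vAng k r (j-1+(i+1))
          = binomZ (((j-1+i : ℕ):ℤ) - j + k - 1) ((k:ℤ) - 3) * vAng k r ((j-1+i)+1) := by
      intro i hi
      rw [show (((j-1+i : ℕ):ℤ) - j + k - 1) = ((i+1 : ℕ):ℤ) + k - 3 by omega,
        show (j-1+i)+1 = j-1+(i+1) by omega]
    rw [Finset.sum_congr rfl hsc, add_comm]
    simp
  · rw [key k r 1 hk le_rfl (by omega), show r-1+2 = r+1 by omega,
      Finset.sum_range_succ', Nat.add_zero, show (1:ℕ)-1 = 0 by omega,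
      hone, one_mul, vAng_zero, add_zero]
    have hsc : ∀ m ∈ range r,
        binomZ (((m+1 : ℕ):ℤ) + k - 3) ((k:ℤ) - 3) * vAng k r (0+(m+1))
          = binomZ ((m:ℤ) + k - 2) ((k:ℤ) - 3) * vAng k r (m+1) := by
      intro m hm
      rw [show ((m:ℤ) + k - 2) = ((m+1 : ℕ):ℤ) + k - 3 by omega, Nat.zero_add]
    rw [Finset.sum_congr rfl hsc]
end
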